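/- Let p_{A,B} and q_{A,B} be joint distributions on finite A × B with ||p_{A,B} - q_{A,B}||_1 ≤ 1/2, and let p_{B̂|B} be any channel from B to B̂ with |B̂| ≤ |B|. Define J(p_{A,B}, p_{B̂|B}) = I(A; B̂) computed under the joint distribution induced by the prior and the channel. Then |J(p_{A,B}, p_{B̂|B}) - J(q_{A,B}, p_{B̂|B})| ≤ 3 ||p_{A,B} - q_{A,B}||_1 · log(|A||B| / ||p_{A,B} - q_{A,B}||_1). -/

import Mathlib

open Finset

/-- Mutual information of a joint distribution `r` on a finite product, given in curried form. -/
noncomputable def mi {A B : Type*} [Fintype A] [Fintype B] (r : A → B → ℝ) : ℝ :=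
  ∑ a, ∑ b, r a b * Real.log (r a b / ((∑ b', r a b') * (∑ a', r a' b)))

lemma eta_subadd {x d : ℝ} (hx : 0 ≤ x) (hd : 0 ≤ d) :
    Real.negMulLog (x + d) ≤ Real.negMulLog x + Real.negMulLog d := by
  simp only [Real.negMulLog, neg_mul]
  have h1 : x * Real.log x ≤ x * Real.log (x + d) := by
    rcases eq_or_lt_of_le hx with h | h
    · simp [← h]
    · exact mul_le_mul_of_nonneg_left (Real.log_le_log h (by linarith)) hx
  have h2 : d * Real.log d ≤ d * Real.log (x + d) := by
    rcases eq_or_lt_of_le hd with h | h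
    · simp [← h]
    · exact mul_le_mul_of_nonneg_left (Real.log_le_log h (by linarith)) hd
  nlinarith

lemma eta_rev {x d : ℝ} (hx : 0 ≤ x) (hd : 0 ≤ d) (h1 : x + d ≤ 1) :
    Real.negMulLog x - Real.negMulLog (x + d) ≤ d := by
  rcases eq_or_lt_of_le hx with h | hxpos
  · simp only [← h, Real.negMulLog_zero, zero_add]
    have := Real.negMulLog_nonneg hd (by linarith)
    linarith
  · have hxd : 0 < x + d := by linarith
    have key : Real.negMulLog x - Real.negMulLog (x + d)
        = x * (Real.log (x + d) - Real.log x) + d * Real.log (x + d) := by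
      simp only [Real.negMulLog, neg_mul]; ring
    rw [key]
    have h2 : Real.log (x + d) - Real.log x ≤ d / x := by
      rw [← Real.log_div hxd.ne' hxpos.ne']
      have := Real.log_le_sub_one_of_pos (show 0 < (x+d)/x by positivity)
      have : (x + d) / x - 1 = d / x := by field_simp; ring
      linarith [Real.log_le_sub_one_of_pos (show 0 < (x+d)/x by positivity)]
    have h3 : x * (Real.log (x + d) - Real.log x) ≤ d := by
      calc x * (Real.log (x + d) - Real.log x) ≤ x * (d / x) :=
            mul_le_mul_of_nonneg_left h2 hx
        _ = d := by field_simp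
    have h4 : d * Real.log (x + d) ≤ 0 :=
      mul_nonpos_of_nonneg_of_nonpos hd (Real.log_nonpos (by linarith) h1)
    linarith

lemma log_two_le_one : Real.log 2 ≤ 1 := by
  have := Real.log_le_sub_one_of_pos (show (0:ℝ) < 2 by norm_num)
  linarith

lemma d_le_eta {d : ℝ} (hd : 0 ≤ d) (hd2 : d ≤ 1/2) :
    d ≤ Real.negMulLog d + (1 - Real.log 2) * d := by
  rcases eq_or_lt_of_le hd with h | h
  · simp [← h]
  · have : Real.log 2 ≤ Real.log d⁻¹ :=
      Real.log_le_log (by norm_num) (by rw [le_inv_comm₀ (by norm_num) h]; linarith)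
    have he : Real.negMulLog d = d * Real.log d⁻¹ := by
      simp [Real.negMulLog, Real.log_inv]; try ring
    nlinarith

lemma eta_abs' {x y : ℝ} (hx0 : 0 ≤ x) (hxy : x ≤ y) (hy1 : y ≤ 1) (hd : y - x ≤ 1/2) :
    |Real.negMulLog x - Real.negMulLog y| ≤
      Real.negMulLog (y - x) + (1 - Real.log 2) * (y - x) := by
  have hd0 : 0 ≤ y - x := by linarith
  have hcd : 0 ≤ (1 - Real.log 2) * (y - x) :=
    mul_nonneg (by linarith [log_two_le_one]) hd0
  rw [abs_sub_le_iff]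
  constructor
  · have := eta_rev hx0 hd0 (by linarith : x + (y - x) ≤ 1)
    have hxy' : x + (y - x) = y := by ring
    rw [hxy'] at this
    have := d_le_eta hd0 hd
    linarith
  · have := eta_subadd hx0 hd0
    have hxy' : x + (y - x) = y := by ring
    rw [hxy'] at this
    linarith

lemma eta_abs {x y : ℝ} (hx0 : 0 ≤ x) (hx1 : x ≤ 1) (hy0 : 0 ≤ y) (hy1 : y ≤ 1)
    (hd : |x - y| ≤ 1/2) :
    |Real.negMulLog x - Real.negMulLog y| ≤
      Real.negMulLog |x - y| + (1 - Real.log 2) * |x - y| := by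
  rcases le_total x y with h | h
  · rw [abs_of_nonpos (by linarith : x - y ≤ 0)] at hd ⊢
    have := eta_abs' hx0 h hy1 (by linarith)
    simpa [neg_sub] using this
  · rw [abs_of_nonneg (by linarith : 0 ≤ x - y)] at hd ⊢
    have := eta_abs' hy0 h hx1 (by linarith)
    rw [abs_sub_comm]
    simpa [neg_sub] using this

lemma sum_eta_le {ι : Type*} [Fintype ι] (d : ι → ℝ) (hd : ∀ i, 0 ≤ d i) :
    ∑ i, Real.negMulLog (d i) ≤
      (Fintype.card ι : ℝ) * Real.negMulLog ((∑ i, d i) / (Fintype.card ι : ℝ)) := by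
  rcases isEmpty_or_nonempty ι with h | h
  · simp
  · have hn : 0 < (Fintype.card ι : ℝ) := by
      exact_mod_cast Fintype.card_pos
    have key := Real.concaveOn_negMulLog.le_map_sum (t := Finset.univ)
      (w := fun _ : ι => (Fintype.card ι : ℝ)⁻¹) (p := d)
      (fun i _ => by positivity)
      (by simp [Finset.card_univ]; try field_simp)
      (fun i _ => hd i)
    simp only [smul_eq_mul] at key
    have h1 : ∑ i, (Fintype.card ι : ℝ)⁻¹ * d i = (∑ i, d i) / (Fintype.card ι : ℝ) := by
      rw [← Finset.mul_sum]; ring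
    rw [h1] at key
    have h2 : ∑ i, (Fintype.card ι : ℝ)⁻¹ * Real.negMulLog (d i)
        = (Fintype.card ι : ℝ)⁻¹ * ∑ i, Real.negMulLog (d i) := by
      rw [← Finset.mul_sum]
    rw [h2] at key
    calc ∑ i, Real.negMulLog (d i)
        = (Fintype.card ι : ℝ) * ((Fintype.card ι : ℝ)⁻¹ * ∑ i, Real.negMulLog (d i)) := by
          field_simp
      _ ≤ (Fintype.card ι : ℝ) * Real.negMulLog ((∑ i, d i) / (Fintype.card ι : ℝ)) :=
          mul_le_mul_of_nonneg_left key hn.le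

lemma eta_div_eq {δ n : ℝ} (hδ : 0 ≤ δ) (hn : 0 < n) :
    n * Real.negMulLog (δ / n) = δ * Real.log (n / δ) := by
  rcases eq_or_lt_of_le hδ with h | h
  · simp [← h]
  · rw [Real.negMulLog, Real.log_div h.ne' hn.ne', Real.log_div hn.ne' h.ne']
    field_simp
    ring

lemma g_mono {n δ ε : ℝ} (hn : 1 ≤ n) (h0 : 0 ≤ δ) (hde : δ ≤ ε) (he : ε ≤ 1/2) :
    δ * Real.log (n / δ) + (1 - Real.log 2) * δ
      ≤ ε * Real.log (n / ε) + (1 - Real.log 2) * ε := by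
  have he0 : 0 ≤ ε := le_trans h0 hde
  rcases eq_or_lt_of_le he0 with h | hε
  · have : δ = 0 := le_antisymm (by linarith) h0
    simp [this, ← h]
  · have hne : 2 ≤ n / ε := by
      rw [le_div_iff₀ hε]; linarith
    have hlog2 : Real.log 2 ≤ Real.log (n / ε) :=
      Real.log_le_log (by norm_num) hne
    rcases eq_or_lt_of_le h0 with h | hδ
    · simp only [← h, zero_mul, mul_zero, add_zero, zero_add]
      have h1 : 0 ≤ Real.log (n / ε) + (1 - Real.log 2) := by
        have := Real.log_nonneg (by linarith : (1:ℝ) ≤ 2)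
        have := Real.log_le_sub_one_of_pos (show (0:ℝ) < 2 by norm_num)
        linarith
      nlinarith
    · have key : Real.log (n / δ) = Real.log (n / ε) + Real.log (ε / δ) := by
        rw [← Real.log_mul (by positivity) (by positivity)]
        congr 1
        try field_simp
        try ring
      have h2 : Real.log (ε / δ) ≤ ε / δ - 1 :=
        Real.log_le_sub_one_of_pos (by positivity)
      have h3 : δ * Real.log (ε / δ) ≤ ε - δ := by
        calc δ * Real.log (ε / δ) ≤ δ * (ε / δ - 1) :=
              mul_le_mul_of_nonneg_left h2 hδ.le
          _ = ε - δ := by field_simp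
      rw [key]
      nlinarith [mul_le_mul_of_nonneg_right hlog2 (show (0:ℝ) ≤ ε - δ by linarith)]

/-- entropy difference bound -/
lemma ent_diff {ι : Type*} [Fintype ι] (u v : ι → ℝ)
    (hu0 : ∀ i, 0 ≤ u i) (hu1 : ∀ i, u i ≤ 1) (hv0 : ∀ i, 0 ≤ v i) (hv1 : ∀ i, v i ≤ 1)
    (hd : ∀ i, |u i - v i| ≤ 1/2) :
    |∑ i, Real.negMulLog (u i) - ∑ i, Real.negMulLog (v i)| ≤
      (Fintype.card ι : ℝ) *
          Real.negMulLog ((∑ i, |u i - v i|) / (Fintype.card ι : ℝ))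
        + (1 - Real.log 2) * ∑ i, |u i - v i| := by
  rw [← Finset.sum_sub_distrib]
  calc |∑ i, (Real.negMulLog (u i) - Real.negMulLog (v i))|
      ≤ ∑ i, |Real.negMulLog (u i) - Real.negMulLog (v i)| :=
        Finset.abs_sum_le_sum_abs _ _
    _ ≤ ∑ i, (Real.negMulLog |u i - v i| + (1 - Real.log 2) * |u i - v i|) :=
        Finset.sum_le_sum fun i _ => eta_abs (hu0 i) (hu1 i) (hv0 i) (hv1 i) (hd i)
    _ = (∑ i, Real.negMulLog |u i - v i|) + (1 - Real.log 2) * ∑ i, |u i - v i| := by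
        rw [Finset.sum_add_distrib, Finset.mul_sum]
    _ ≤ _ := by
        gcongr ?_ + _
        exact sum_eta_le _ fun i => abs_nonneg _

/-- mi decompose -/
lemma mi_eq {A B : Type*} [Fintype A] [Fintype B] (r : A → B → ℝ) (h0 : ∀ a b, 0 ≤ r a b) :
    mi r = ∑ a, Real.negMulLog (∑ b, r a b) + ∑ b, Real.negMulLog (∑ a, r a b)
            - ∑ a, ∑ b, Real.negMulLog (r a b) := by
  have key : ∀ a b, r a b * Real.log (r a b / ((∑ b', r a b') * (∑ a', r a' b)))
      = -Real.negMulLog (r a b) - r a b * Real.log (∑ b', r a b')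
        - r a b * Real.log (∑ a', r a' b) := by
    intro a b
    rcases eq_or_lt_of_le (h0 a b) with h | h
    · simp [← h, Real.negMulLog]
    · have hs : 0 < ∑ b', r a b' :=
        lt_of_lt_of_le h (Finset.single_le_sum (fun i _ => h0 a i) (Finset.mem_univ b))
      have ht : 0 < ∑ a', r a' b :=
        lt_of_lt_of_le h (Finset.single_le_sum (fun i _ => h0 i b) (Finset.mem_univ a))
      rw [Real.log_div h.ne' (by positivity), Real.log_mul hs.ne' ht.ne', Real.negMulLog]
      ring
  unfold mi
  simp only [key]
  have e1 : ∑ a, ∑ b, r a b * Real.log (∑ b', r a b')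
      = -∑ a, Real.negMulLog (∑ b, r a b) := by
    rw [← Finset.sum_neg_distrib]
    refine Finset.sum_congr rfl fun a _ => ?_
    rw [← Finset.sum_mul, Real.negMulLog]
    ring
  have e2 : ∑ a, ∑ b, r a b * Real.log (∑ a', r a' b)
      = -∑ b, Real.negMulLog (∑ a, r a b) := by
    rw [Finset.sum_comm, ← Finset.sum_neg_distrib]
    refine Finset.sum_congr rfl fun b _ => ?_
    rw [← Finset.sum_mul, Real.negMulLog]
    ring
  simp only [Finset.sum_sub_distrib, e1, e2, Finset.sum_neg_distrib]
  ring

lemma mi_zero_left {A B : Type*} [Fintype A] [Fintype B] (r : A → B → ℝ)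
    (h0 : ∀ a b, 0 ≤ r a b) (htot : ∑ a, ∑ b, r a b = 1) (hA : Fintype.card A = 1) :
    mi r = 0 := by
  obtain ⟨a0, ha⟩ := Fintype.card_eq_one_iff.mp hA
  haveI : Unique A := ⟨⟨a0⟩, ha⟩
  rw [mi_eq r h0]
  simp only [Fintype.sum_unique] at htot ⊢
  rw [htot, Real.negMulLog_one]
  ring

lemma mi_zero_right {A B : Type*} [Fintype A] [Fintype B] (r : A → B → ℝ)
    (h0 : ∀ a b, 0 ≤ r a b) (htot : ∑ a, ∑ b, r a b = 1) (hB : Fintype.card B = 1) :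
    mi r = 0 := by
  obtain ⟨b0, hb⟩ := Fintype.card_eq_one_iff.mp hB
  haveI : Unique B := ⟨⟨b0⟩, hb⟩
  rw [mi_eq r h0]
  simp only [Fintype.sum_unique] at htot ⊢
  rw [htot, Real.negMulLog_one]
  ring

set_option maxHeartbeats 1000000 in
theorem stmt_2 {A B Bh : Type*} [Fintype A] [Fintype B] [Fintype Bh]
    (p q : A → B → ℝ) (W : B → Bh → ℝ)
    (hp0 : ∀ a b, 0 ≤ p a b) (hq0 : ∀ a b, 0 ≤ q a b)
    (hp1 : ∑ a, ∑ b, p a b = 1) (hq1 : ∑ a, ∑ b, q a b = 1)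
    (hW0 : ∀ b bh, 0 ≤ W b bh) (hW1 : ∀ b, ∑ bh, W b bh = 1)
    (hcard : Fintype.card Bh ≤ Fintype.card B)
    (hdist : ∑ a, ∑ b, |p a b - q a b| ≤ 1 / 2) :
    |mi (fun a bh => ∑ b, W b bh * p a b) - mi (fun a bh => ∑ b, W b bh * q a b)|
      ≤ 3 * (∑ a, ∑ b, |p a b - q a b|) *
        Real.log ((Fintype.card A * Fintype.card B : ℝ) / (∑ a, ∑ b, |p a b - q a b|)) := by
  -- nonemptiness
  rcases isEmpty_or_nonempty A with hAe | hAne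
  · rw [Finset.univ_eq_empty] at hp1; simp at hp1
  rcases isEmpty_or_nonempty B with hBe | hBne
  · simp only [Finset.univ_eq_empty, Finset.sum_empty, Finset.sum_const_zero] at hp1
    norm_num at hp1
  rcases isEmpty_or_nonempty Bh with hBhe | hBhne
  · obtain ⟨b⟩ := hBne
    have := hW1 b
    rw [Finset.univ_eq_empty] at this; simp at this
  set ε := ∑ a, ∑ b, |p a b - q a b| with hεdef
  have hε0 : 0 ≤ ε := Finset.sum_nonneg fun a _ =>
    Finset.sum_nonneg fun b _ => abs_nonneg _
  rcases eq_or_lt_of_le hε0 with hε | hεpos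
  · -- ε = 0 : p = q
    have hpq : ∀ a b, p a b = q a b := by
      intro a b
      have h1 : ∀ a ∈ Finset.univ, (0:ℝ) ≤ ∑ b, |p a b - q a b| :=
        fun a _ => Finset.sum_nonneg fun b _ => abs_nonneg _
      have h2 := (Finset.sum_eq_zero_iff_of_nonneg h1).mp hε.symm a (Finset.mem_univ a)
      have h3 := (Finset.sum_eq_zero_iff_of_nonneg
        (fun b _ => abs_nonneg (p a b - q a b))).mp h2 b (Finset.mem_univ b)
      have := abs_eq_zero.mp h3
      linarith
    have : p = q := funext fun a => funext fun b => hpq a b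
    subst this
    simp [← hε]
  -- main setting
  set rp := fun a bh => ∑ b, W b bh * p a b with hrpdef
  set rq := fun a bh => ∑ b, W b bh * q a b with hrqdef
  have hrp0 : ∀ a bh, 0 ≤ rp a bh := fun a bh =>
    Finset.sum_nonneg fun b _ => mul_nonneg (hW0 b bh) (hp0 a b)
  have hrq0 : ∀ a bh, 0 ≤ rq a bh := fun a bh =>
    Finset.sum_nonneg fun b _ => mul_nonneg (hW0 b bh) (hq0 a b)
  have hrowp : ∀ a, ∑ bh, rp a bh = ∑ b, p a b := by
    intro a
    rw [Finset.sum_comm]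
    refine Finset.sum_congr rfl fun b _ => ?_
    rw [← Finset.sum_mul, hW1 b, one_mul]
  have hrowq : ∀ a, ∑ bh, rq a bh = ∑ b, q a b := by
    intro a
    rw [Finset.sum_comm]
    refine Finset.sum_congr rfl fun b _ => ?_
    rw [← Finset.sum_mul, hW1 b, one_mul]
  have htotp : ∑ a, ∑ bh, rp a bh = 1 := by
    rw [Finset.sum_congr rfl fun a _ => hrowp a]; exact hp1
  have htotq : ∑ a, ∑ bh, rq a bh = 1 := by
    rw [Finset.sum_congr rfl fun a _ => hrowq a]; exact hq1
  -- degenerate cases : card A = 1 or card Bh = 1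
  have hRHS0 : 0 ≤ 3 * ε * Real.log ((Fintype.card A * Fintype.card B : ℝ) / ε) := by
    have h1 : (1:ℝ) ≤ (Fintype.card A * Fintype.card B : ℝ) / ε := by
      rw [le_div_iff₀ hεpos]
      have hA1 : (1:ℝ) ≤ (Fintype.card A : ℝ) := by
        exact_mod_cast Fintype.card_pos
      have hB1 : (1:ℝ) ≤ (Fintype.card B : ℝ) := by
        exact_mod_cast Fintype.card_pos
      nlinarith
    have := Real.log_nonneg h1
    positivity
  rcases eq_or_lt_of_le (show 1 ≤ Fintype.card A from Fintype.card_pos) with hA1 | hA2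
  · rw [mi_zero_left rp hrp0 htotp hA1.symm, mi_zero_left rq hrq0 htotq hA1.symm]
    simpa using hRHS0
  rcases eq_or_lt_of_le (show 1 ≤ Fintype.card Bh from Fintype.card_pos) with hBh1 | hBh2
  · rw [mi_zero_right rp hrp0 htotp hBh1.symm, mi_zero_right rq hrq0 htotq hBh1.symm]
    simpa using hRHS0
  -- main case: 2 ≤ card A, 2 ≤ card Bh
  have hε2 : ε ≤ 1/2 := hdist
  have htotp' : ∑ bh, ∑ a, rp a bh = 1 := by rw [Finset.sum_comm]; exact htotp
  have htotq' : ∑ bh, ∑ a, rq a bh = 1 := by rw [Finset.sum_comm]; exact htotq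
  have hrowle_p : ∀ a, ∑ bh, rp a bh ≤ 1 := by
    intro a
    rw [← htotp]
    exact Finset.single_le_sum (f := fun a => ∑ bh, rp a bh)
      (fun a _ => Finset.sum_nonneg fun bh _ => hrp0 a bh) (Finset.mem_univ a)
  have hrowle_q : ∀ a, ∑ bh, rq a bh ≤ 1 := by
    intro a
    rw [← htotq]
    exact Finset.single_le_sum (f := fun a => ∑ bh, rq a bh)
      (fun a _ => Finset.sum_nonneg fun bh _ => hrq0 a bh) (Finset.mem_univ a)
  have hcolle_p : ∀ bh, ∑ a, rp a bh ≤ 1 := by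
    intro bh
    rw [← htotp']
    exact Finset.single_le_sum (f := fun bh => ∑ a, rp a bh)
      (fun bh _ => Finset.sum_nonneg fun a _ => hrp0 a bh) (Finset.mem_univ bh)
  have hcolle_q : ∀ bh, ∑ a, rq a bh ≤ 1 := by
    intro bh
    rw [← htotq']
    exact Finset.single_le_sum (f := fun bh => ∑ a, rq a bh)
      (fun bh _ => Finset.sum_nonneg fun a _ => hrq0 a bh) (Finset.mem_univ bh)
  have hentle_p : ∀ a bh, rp a bh ≤ 1 := fun a bh =>
    le_trans (Finset.single_le_sum (fun bh _ => hrp0 a bh) (Finset.mem_univ bh)) (hrowle_p a)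
  have hentle_q : ∀ a bh, rq a bh ≤ 1 := fun a bh =>
    le_trans (Finset.single_le_sum (fun bh _ => hrq0 a bh) (Finset.mem_univ bh)) (hrowle_q a)
  -- distances
  have hdJ : ∑ a, ∑ bh, |rp a bh - rq a bh| ≤ ε := by
    rw [hεdef]
    refine Finset.sum_le_sum fun a _ => ?_
    have step1 : ∀ bh, |rp a bh - rq a bh| ≤ ∑ b, W b bh * |p a b - q a b| := by
      intro bh
      have h : rp a bh - rq a bh = ∑ b, W b bh * (p a b - q a b) := by
        rw [← Finset.sum_sub_distrib]
        exact Finset.sum_congr rfl fun b _ => by ring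
      rw [h]
      refine le_trans (Finset.abs_sum_le_sum_abs _ _) (Finset.sum_le_sum fun b _ => ?_)
      rw [abs_mul, abs_of_nonneg (hW0 b bh)]
    calc ∑ bh, |rp a bh - rq a bh| ≤ ∑ bh, ∑ b, W b bh * |p a b - q a b| :=
          Finset.sum_le_sum fun bh _ => step1 bh
      _ = ∑ b, |p a b - q a b| := by
          rw [Finset.sum_comm]
          refine Finset.sum_congr rfl fun b _ => ?_
          rw [← Finset.sum_mul, hW1 b, one_mul]
  have hdA : ∑ a, |(∑ bh, rp a bh) - (∑ bh, rq a bh)| ≤ ε := by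
    rw [hεdef]
    refine Finset.sum_le_sum fun a _ => ?_
    rw [hrowp a, hrowq a, ← Finset.sum_sub_distrib]
    exact Finset.abs_sum_le_sum_abs _ _
  have hdB : ∑ bh, |(∑ a, rp a bh) - (∑ a, rq a bh)| ≤ ε := by
    calc ∑ bh, |(∑ a, rp a bh) - (∑ a, rq a bh)|
        ≤ ∑ bh, ∑ a, |rp a bh - rq a bh| := by
          refine Finset.sum_le_sum fun bh _ => ?_
          rw [← Finset.sum_sub_distrib]
          exact Finset.abs_sum_le_sum_abs _ _
      _ = ∑ a, ∑ bh, |rp a bh - rq a bh| := Finset.sum_comm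
      _ ≤ ε := hdJ
  -- per-entry half bounds
  have habs_nn : ∀ (ι : Type) (f : ι → ℝ), True := fun _ _ => trivial
  have hhalfA : ∀ a, |(∑ bh, rp a bh) - (∑ bh, rq a bh)| ≤ 1/2 := by
    intro a
    refine le_trans ?_ (le_trans hdA hε2)
    exact Finset.single_le_sum (f := fun a => |(∑ bh, rp a bh) - (∑ bh, rq a bh)|)
      (fun a _ => abs_nonneg _) (Finset.mem_univ a)
  have hhalfB : ∀ bh, |(∑ a, rp a bh) - (∑ a, rq a bh)| ≤ 1/2 := by
    intro bh
    refine le_trans ?_ (le_trans hdB hε2)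
    exact Finset.single_le_sum (f := fun bh => |(∑ a, rp a bh) - (∑ a, rq a bh)|)
      (fun bh _ => abs_nonneg _) (Finset.mem_univ bh)
  have hhalfJ : ∀ a bh, |rp a bh - rq a bh| ≤ 1/2 := by
    intro a bh
    refine le_trans ?_ (le_trans hdJ hε2)
    calc |rp a bh - rq a bh|
        ≤ ∑ bh, |rp a bh - rq a bh| :=
          Finset.single_le_sum (f := fun bh' => |rp a bh' - rq a bh'|)
            (fun _ _ => abs_nonneg _) (Finset.mem_univ bh)
      _ ≤ ∑ a, ∑ bh, |rp a bh - rq a bh| :=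
          Finset.single_le_sum (f := fun a => ∑ bh, |rp a bh - rq a bh|)
            (fun a _ => Finset.sum_nonneg fun bh _ => abs_nonneg _) (Finset.mem_univ a)
  -- cards
  set nA : ℝ := (Fintype.card A : ℝ) with hnAdef
  set nBh : ℝ := (Fintype.card Bh : ℝ) with hnBhdef
  set nB : ℝ := (Fintype.card B : ℝ) with hnBdef
  have hnA2 : (2:ℝ) ≤ nA := by
    have h : 2 ≤ Fintype.card A := hA2
    rw [hnAdef]; exact_mod_cast h
  have hnBh2 : (2:ℝ) ≤ nBh := by
    have h : 2 ≤ Fintype.card Bh := hBh2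
    rw [hnBhdef]; exact_mod_cast h
  have hnBBh : nBh ≤ nB := by
    rw [hnBhdef, hnBdef]; exact_mod_cast hcard
  have hnA0 : (0:ℝ) < nA := by linarith
  have hnBh0 : (0:ℝ) < nBh := by linarith
  have hnB0 : (0:ℝ) < nB := by linarith
  -- three entropy bounds
  have c_def : True := trivial
  have E1 : |(∑ a, Real.negMulLog (∑ bh, rp a bh)) - ∑ a, Real.negMulLog (∑ bh, rq a bh)|
      ≤ ε * Real.log (nA / ε) + (1 - Real.log 2) * ε := by
    have h := ent_diff (fun a => ∑ bh, rp a bh) (fun a => ∑ bh, rq a bh)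
      (fun a => Finset.sum_nonneg fun bh _ => hrp0 a bh) hrowle_p
      (fun a => Finset.sum_nonneg fun bh _ => hrq0 a bh) hrowle_q hhalfA
    refine h.trans ?_
    set δ := ∑ a, |(∑ bh, rp a bh) - (∑ bh, rq a bh)| with hδ
    have hδ0 : 0 ≤ δ := Finset.sum_nonneg fun a _ => abs_nonneg _
    rw [eta_div_eq hδ0 hnA0]
    exact g_mono (by linarith) hδ0 hdA hε2
  have E2 : |(∑ bh, Real.negMulLog (∑ a, rp a bh)) - ∑ bh, Real.negMulLog (∑ a, rq a bh)|
      ≤ ε * Real.log (nBh / ε) + (1 - Real.log 2) * ε := by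
    have h := ent_diff (fun bh => ∑ a, rp a bh) (fun bh => ∑ a, rq a bh)
      (fun bh => Finset.sum_nonneg fun a _ => hrp0 a bh) hcolle_p
      (fun bh => Finset.sum_nonneg fun a _ => hrq0 a bh) hcolle_q hhalfB
    refine h.trans ?_
    have hδ0 : 0 ≤ ∑ bh, |(∑ a, rp a bh) - (∑ a, rq a bh)| :=
      Finset.sum_nonneg fun bh _ => abs_nonneg _
    rw [eta_div_eq hδ0 hnBh0]
    exact g_mono (by linarith) hδ0 hdB hε2
  have E3 : |(∑ a, ∑ bh, Real.negMulLog (rp a bh)) - ∑ a, ∑ bh, Real.negMulLog (rq a bh)|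
      ≤ ε * Real.log (nA * nBh / ε) + (1 - Real.log 2) * ε := by
    have h := ent_diff (fun x : A × Bh => rp x.1 x.2) (fun x : A × Bh => rq x.1 x.2)
      (fun x => hrp0 x.1 x.2) (fun x => hentle_p x.1 x.2)
      (fun x => hrq0 x.1 x.2) (fun x => hentle_q x.1 x.2) (fun x => hhalfJ x.1 x.2)
    rw [Fintype.sum_prod_type, Fintype.sum_prod_type, Fintype.sum_prod_type] at h
    have hcardprod : ((Fintype.card (A × Bh) : ℕ) : ℝ) = nA * nBh := by
      rw [Fintype.card_prod]; push_cast; ring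
    rw [hcardprod] at h
    refine h.trans ?_
    have hδ0 : 0 ≤ ∑ a, ∑ bh, |rp a bh - rq a bh| :=
      Finset.sum_nonneg fun a _ => Finset.sum_nonneg fun bh _ => abs_nonneg _
    rw [eta_div_eq hδ0 (by positivity)]
    exact g_mono (by nlinarith) hδ0 hdJ hε2
  -- combine
  have hmidiff : |mi rp - mi rq|
      ≤ |(∑ a, Real.negMulLog (∑ bh, rp a bh)) - ∑ a, Real.negMulLog (∑ bh, rq a bh)|
        + |(∑ bh, Real.negMulLog (∑ a, rp a bh)) - ∑ bh, Real.negMulLog (∑ a, rq a bh)|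
        + |(∑ a, ∑ bh, Real.negMulLog (rp a bh)) - ∑ a, ∑ bh, Real.negMulLog (rq a bh)| := by
    rw [mi_eq rp hrp0, mi_eq rq hrq0]
    set x1 := ∑ a, Real.negMulLog (∑ bh, rp a bh)
    set x2 := ∑ bh, Real.negMulLog (∑ a, rp a bh)
    set x3 := ∑ a, ∑ bh, Real.negMulLog (rp a bh)
    set y1 := ∑ a, Real.negMulLog (∑ bh, rq a bh)
    set y2 := ∑ bh, Real.negMulLog (∑ a, rq a bh)
    set y3 := ∑ a, ∑ bh, Real.negMulLog (rq a bh)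
    have : x1 + x2 - x3 - (y1 + y2 - y3) = (x1 - y1) + (x2 - y2) - (x3 - y3) := by ring
    rw [this]
    calc |(x1 - y1) + (x2 - y2) - (x3 - y3)|
        ≤ |(x1 - y1) + (x2 - y2)| + |x3 - y3| := abs_sub _ _
      _ ≤ |x1 - y1| + |x2 - y2| + |x3 - y3| := by
          have := abs_add_le (x1 - y1) (x2 - y2)
          linarith
  -- numeric finish
  have hεne : ε ≠ 0 := ne_of_gt hεpos
  have lgA : Real.log (nA / ε) = Real.log nA - Real.log ε :=
    Real.log_div (ne_of_gt hnA0) hεne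
  have lgB : Real.log (nBh / ε) = Real.log nBh - Real.log ε :=
    Real.log_div (ne_of_gt hnBh0) hεne
  have lgJ : Real.log (nA * nBh / ε) = Real.log nA + Real.log nBh - Real.log ε := by
    rw [Real.log_div (by positivity) hεne, Real.log_mul (ne_of_gt hnA0) (ne_of_gt hnBh0)]
  have lgR : Real.log (nA * nB / ε) = Real.log nA + Real.log nB - Real.log ε := by
    rw [Real.log_div (by positivity) hεne, Real.log_mul (ne_of_gt hnA0) (ne_of_gt hnB0)]
  have hlA : Real.log 2 ≤ Real.log nA := Real.log_le_log (by norm_num) hnA2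
  have hlBh : Real.log 2 ≤ Real.log nBh := Real.log_le_log (by norm_num) hnBh2
  have hlBBh : Real.log nBh ≤ Real.log nB := Real.log_le_log hnBh0 hnBBh
  have hlog2 : (0.6931471803 : ℝ) < Real.log 2 := Real.log_two_gt_d9
  have key : 2 * Real.log nA + 2 * Real.log nBh + 3 - 3 * Real.log 2
      ≤ 3 * Real.log nA + 3 * Real.log nB := by linarith
  calc |mi rp - mi rq|
      ≤ (ε * Real.log (nA / ε) + (1 - Real.log 2) * ε)
        + (ε * Real.log (nBh / ε) + (1 - Real.log 2) * ε)
        + (ε * Real.log (nA * nBh / ε) + (1 - Real.log 2) * ε) := by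
        refine hmidiff.trans ?_
        linarith [E1, E2, E3]
    _ ≤ 3 * ε * Real.log (nA * nB / ε) := by
        rw [lgA, lgB, lgJ, lgR]
        nlinarith [mul_le_mul_of_nonneg_left key hεpos.le]
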